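/- (Theorem 2, high significance.) Fix a critical value c and p ∈ (0, 1). Then the conditional quantile converges to the conventional one as the observed statistic grows: for every ξ > 0 there exists M ∈ ℝ such that for every x > M and every θ ∈ ℝ satisfying F(x; θ, c) = p, one has |θ − (x − Φ⁻¹(p))| ≤ ξ, where Φ⁻¹ is the inverse of the standard normal CDF. -/

import Mathlib

open Filter Set

/-- The standard normal CDF `Φ(t) = (2π)^{−1/2} ∫_{−∞}^t exp(−s²/2) ds`. -/
noncomputable def Phi (t : ℝ) : ℝ :=
  (Real.sqrt (2 * Real.pi))⁻¹ * ∫ s in Set.Iic t, Real.exp (-(s ^ 2) / 2)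

/-- The truncated-normal distribution function
    `F(a; θ, c) := (Φ(a − θ) − Φ(c − θ)) / (1 − Φ(c − θ))`. -/
noncomputable def F (a θ c : ℝ) : ℝ :=
  (Phi (a - θ) - Phi (c - θ)) / (1 - Phi (c - θ))

/-- The inverse of the standard normal CDF on `(0,1)`. -/
noncomputable def PhiInv : ℝ → ℝ := Function.invFun Phi

open MeasureTheory Topology

noncomputable def gfun (s : ℝ) : ℝ := Real.exp (-(s ^ 2) / 2)

lemma gfun_eq : gfun = fun s : ℝ => Real.exp (-(1/2 : ℝ) * s ^ 2) := by
  funext s; unfold gfun; congr 1; ring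

lemma gfun_int : Integrable gfun := by
  rw [gfun_eq]; exact integrable_exp_neg_mul_sq (by norm_num)

lemma gfun_pos (s : ℝ) : 0 < gfun s := Real.exp_pos _

lemma gfun_total : ∫ s, gfun s = Real.sqrt (2 * Real.pi) := by
  rw [gfun_eq, integral_gaussian]
  norm_num
  rw [mul_comm]

lemma sqrt2pi_pos : 0 < Real.sqrt (2 * Real.pi) :=
  Real.sqrt_pos.mpr (by positivity)

lemma int_Iic_pos (t : ℝ) : 0 < ∫ s in Iic t, gfun s := by
  rw [setIntegral_pos_iff_support_of_nonneg_ae]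
  · have : Function.support gfun = univ := by
      ext s; simp [Function.mem_support, (gfun_pos s).ne']
    rw [this, univ_inter]
    simp [Real.volume_Iic]
  · exact Filter.Eventually.of_forall fun s => (gfun_pos s).le
  · exact gfun_int.integrableOn

lemma int_Ioi_pos (t : ℝ) : 0 < ∫ s in Ioi t, gfun s := by
  rw [setIntegral_pos_iff_support_of_nonneg_ae]
  · have : Function.support gfun = univ := by
      ext s; simp [Function.mem_support, (gfun_pos s).ne']
    rw [this, univ_inter]
    simp [Real.volume_Ioi]
  · exact Filter.Eventually.of_forall fun s => (gfun_pos s).le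
  · exact gfun_int.integrableOn

lemma int_Ioc_pos {a b : ℝ} (h : a < b) : 0 < ∫ s in Ioc a b, gfun s := by
  rw [setIntegral_pos_iff_support_of_nonneg_ae]
  · have : Function.support gfun = univ := by
      ext s; simp [Function.mem_support, (gfun_pos s).ne']
    rw [this, univ_inter]
    simp [Real.volume_Ioc, h]
  · exact Filter.Eventually.of_forall fun s => (gfun_pos s).le
  · exact gfun_int.integrableOn

lemma Phi_def (t : ℝ) : Phi t = (Real.sqrt (2 * Real.pi))⁻¹ * ∫ s in Iic t, gfun s := rfl

lemma one_sub_Phi (t : ℝ) :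
    1 - Phi t = (Real.sqrt (2 * Real.pi))⁻¹ * ∫ s in Ioi t, gfun s := by
  have h := intervalIntegral.integral_Iic_add_Ioi (b := t) (f := gfun) (μ := volume)
    gfun_int.integrableOn gfun_int.integrableOn
  rw [gfun_total] at h
  rw [Phi_def]
  have hs := sqrt2pi_pos.ne'
  have key : (Real.sqrt (2*Real.pi))⁻¹ * ((∫ s in Iic t, gfun s) + ∫ s in Ioi t, gfun s) = 1 := by
    rw [h]; exact inv_mul_cancel₀ hs
  ring_nf at key ⊢
  linarith

lemma Phi_strictMono : StrictMono Phi := by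
  intro a b hab
  rw [Phi_def, Phi_def]
  have h := intervalIntegral.integral_Iic_sub_Iic (a := a) (b := b) (f := gfun) (μ := volume)
    gfun_int.integrableOn gfun_int.integrableOn
  rw [intervalIntegral.integral_of_le hab.le] at h
  have hpos := int_Ioc_pos hab
  nlinarith [inv_pos.mpr sqrt2pi_pos, int_Iic_pos a]

lemma Phi_pos (t : ℝ) : 0 < Phi t :=
  mul_pos (inv_pos.mpr sqrt2pi_pos) (int_Iic_pos t)

lemma Phi_lt_one (t : ℝ) : Phi t < 1 := by
  have := mul_pos (inv_pos.mpr sqrt2pi_pos) (int_Ioi_pos t)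
  have h := one_sub_Phi t
  linarith

lemma int_Ioi_shift (t s : ℝ) (hs : 0 ≤ s) :
    (∫ u in Ioi (t + s), gfun u) ≤ Real.exp (-(t*s) - s^2/2) * ∫ u in Ioi t, gfun u := by
  have hmp : MeasurePreserving (fun x : ℝ => x + s) volume volume :=
    measurePreserving_add_right volume s
  have hemb : MeasurableEmbedding (fun x : ℝ => x + s) :=
    (Homeomorph.addRight s).isClosedEmbedding.measurableEmbedding
  have h1 : (∫ u in Ioi (t + s), gfun u) = ∫ x in Ioi t, gfun (x + s) := by
    rw [← hmp.setIntegral_preimage_emb hemb gfun (Ioi (t+s)), preimage_add_const_Ioi]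
    norm_num
  rw [h1]
  have h2 : ∀ x ∈ Ioi t, gfun (x + s) ≤ Real.exp (-(t*s) - s^2/2) * gfun x := by
    intro x hx
    have hx' : t ≤ x := le_of_lt hx
    have : gfun (x + s) = Real.exp (-(x*s) - s^2/2) * gfun x := by
      unfold gfun
      rw [← Real.exp_add]
      congr 1; ring
    rw [this]
    have : Real.exp (-(x*s) - s^2/2) ≤ Real.exp (-(t*s) - s^2/2) := by
      apply Real.exp_le_exp.mpr
      nlinarith
    nlinarith [ (gfun_pos x).le, Real.exp_pos (-(x*s) - s^2/2) ]
  calc (∫ x in Ioi t, gfun (x + s))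
      ≤ ∫ x in Ioi t, Real.exp (-(t*s) - s^2/2) * gfun x := by
        apply setIntegral_mono_on
        · exact ((hmp.integrable_comp_emb hemb).mpr gfun_int).integrableOn
        · exact (gfun_int.const_mul _).integrableOn
        · exact measurableSet_Ioi
        · exact h2
    _ = Real.exp (-(t*s) - s^2/2) * ∫ x in Ioi t, gfun x := by
        exact integral_const_mul _ _

lemma Phi_continuous : Continuous Phi := by
  have h0 : ∀ t : ℝ, (∫ s in Iic t, gfun s)
      = (∫ s in Iic 0, gfun s) + ∫ s in (0:ℝ)..t, gfun s := by
    intro t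
    have := intervalIntegral.integral_Iic_sub_Iic (a := (0:ℝ)) (b := t) (f := gfun) (μ := volume)
      gfun_int.integrableOn gfun_int.integrableOn
    linarith
  have heq : (fun t : ℝ => ∫ s in Iic t, gfun s)
      = fun t => (∫ s in Iic 0, gfun s) + ∫ s in (0:ℝ)..t, gfun s := funext h0
  have : Continuous fun t : ℝ => ∫ s in Iic t, gfun s := by
    rw [heq]
    exact continuous_const.add (gfun_int.continuous_primitive 0)
  exact continuous_const.mul this

lemma Phi_tendsto_atTop : Tendsto Phi atTop (𝓝 1) := by
  have hcov : AECover (volume : Measure ℝ) atTop (fun t : ℝ => Iic t) :=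
    aecover_Iic tendsto_id
  have h := hcov.integral_tendsto_of_countably_generated gfun_int
  rw [gfun_total] at h
  have := h.const_mul (Real.sqrt (2 * Real.pi))⁻¹
  rw [inv_mul_cancel₀ sqrt2pi_pos.ne'] at this
  exact this

lemma Phi_neg (t : ℝ) : Phi (-t) = 1 - Phi t := by
  have heven : ∀ x : ℝ, gfun (-x) = gfun x := by
    intro x; unfold gfun; congr 1; ring
  have h1 : (∫ x in Iic (-t), gfun x) = ∫ x in Ioi t, gfun x := by
    calc (∫ x in Iic (-t), gfun x) = ∫ x in Iic (-t), gfun (-x) := by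
          exact setIntegral_congr_fun measurableSet_Iic fun x _ => (heven x).symm
      _ = ∫ x in Ioi (- -t), gfun x := integral_comp_neg_Iic _ _
      _ = ∫ x in Ioi t, gfun x := by rw [neg_neg]
  rw [Phi_def, h1, one_sub_Phi]

lemma Phi_tendsto_atBot : Tendsto Phi atBot (𝓝 0) := by
  have h : Tendsto (fun t : ℝ => 1 - Phi (-t)) atBot (𝓝 0) := by
    have h2 : Tendsto (fun t : ℝ => Phi (-t)) atBot (𝓝 1) :=
      Phi_tendsto_atTop.comp tendsto_neg_atBot_atTop
    have := h2.const_sub 1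
    simpa using this
  refine h.congr fun t => ?_
  rw [Phi_neg]; ring

lemma Phi_surj {p : ℝ} (hp : p ∈ Ioo (0:ℝ) 1) : ∃ t, Phi t = p := by
  obtain ⟨a, ha⟩ := (Phi_tendsto_atBot.eventually (eventually_lt_nhds hp.1)).exists
  obtain ⟨b, hb⟩ := (Phi_tendsto_atTop.eventually (eventually_gt_nhds hp.2)).exists
  have hab : a ≤ b := by
    by_contra hba
    exact absurd (Phi_strictMono (lt_of_not_ge hba)) (by linarith)
  have := intermediate_value_Icc hab Phi_continuous.continuousOn
  obtain ⟨t, _, ht⟩ := this ⟨ha.le, hb.le⟩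
  exact ⟨t, ht⟩

lemma Phi_PhiInv {p : ℝ} (hp : p ∈ Ioo (0:ℝ) 1) : Phi (PhiInv p) = p :=
  Function.invFun_eq (Phi_surj hp)

set_option maxHeartbeats 1000000 in
/-- (Theorem 2, high significance.) Fix `c` and `p ∈ (0,1)`. For every `ξ > 0`
there exists `M` such that for every `x > M` and every `θ` with `F(x; θ, c) = p`,
one has `|θ − (x − Φ⁻¹(p))| ≤ ξ`. -/
theorem stmt_5 (c p : ℝ) (hp : p ∈ Set.Ioo (0 : ℝ) 1) :
    ∀ ξ > (0 : ℝ), ∃ M : ℝ, ∀ x : ℝ, M < x →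
      ∀ θ : ℝ, F x θ c = p → |θ - (x - PhiInv p)| ≤ ξ := by
  obtain ⟨hp0, hp1⟩ := hp
  intro ξ hξ
  have hip : Phi (PhiInv p) = p := Phi_PhiInv ⟨hp0, hp1⟩
  set ip := PhiInv p with hip_def
  set q := Phi (ip + ξ) with hq_def
  have hq1 : q < 1 := Phi_lt_one _
  have hpq : p < q := by rw [← hip]; exact Phi_strictMono (by linarith)
  have hr : (q - p) / (1 - p) ∈ Ioo (0:ℝ) 1 := by
    constructor
    · apply div_pos <;> linarith
    · rw [div_lt_one (by linarith)]; linarith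
  have hK : Phi (PhiInv ((q - p) / (1 - p))) = (q - p) / (1 - p) := Phi_PhiInv hr
  set K := PhiInv ((q - p) / (1 - p)) with hK_def
  -- choose s₀ such that for s ≥ s₀, exp (-(K*s) - s^2/2) < 1 - p
  have htend : Tendsto (fun s : ℝ => Real.exp (-(K*s) - s^2/2)) atTop (𝓝 0) := by
    have h1 : Tendsto (fun s : ℝ => s * (s/2 + K)) atTop atTop := by
      apply Filter.Tendsto.atTop_mul_atTop₀ tendsto_id
      apply tendsto_atTop_add_const_right
      exact tendsto_id.atTop_div_const two_pos
    have h2 : Tendsto (fun s : ℝ => -(s * (s/2 + K))) atTop atBot :=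
      tendsto_neg_atTop_atBot.comp h1
    have h3 := Real.tendsto_exp_atBot.comp h2
    refine h3.congr fun s => ?_
    simp only [Function.comp_apply]
    congr 1; ring
  have hev : ∀ᶠ s in atTop, Real.exp (-(K*s) - s^2/2) < 1 - p :=
    htend.eventually (eventually_lt_nhds (by linarith))
  obtain ⟨s₀, hs₀⟩ := Filter.eventually_atTop.mp hev
  clear_value ip q K
  refine ⟨c + max s₀ 0, fun x hx θ hF => ?_⟩
  set s := x - c with hs_def
  have hss : s₀ ≤ s := le_trans (le_max_left _ _) (by simp only [hs_def]; linarith)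
  have hs0 : (0:ℝ) ≤ s := le_trans (le_max_right _ _) (by simp only [hs_def]; linarith)
  set u := x - θ with hu_def
  set v := c - θ with hv_def
  clear_value s u v
  have huv : u = v + s := by simp only [hu_def, hv_def, hs_def]; ring
  have hv0 : 0 < Phi v := Phi_pos v
  have hv1 : Phi v < 1 := Phi_lt_one v
  have hF' : Phi u - Phi v = p * (1 - Phi v) := by
    have h := hF
    unfold F at h
    rw [← hu_def, ← hv_def] at h
    rw [div_eq_iff (by linarith)] at h
    linarith [h]
  have hu_eq : Phi u = p + (1 - p) * Phi v := by nlinarith [hF']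
  have hup : p < Phi u := by nlinarith
  have hu_gt : ip < u := by
    have : Phi ip < Phi u := by rw [hip]; exact hup
    exact Phi_strictMono.lt_iff_lt.mp this
  have hu_le : u ≤ ip + ξ := by
    by_contra hcon
    push_neg at hcon
    have hq_lt : q < Phi u := by rw [hq_def]; exact Phi_strictMono hcon
    have hv_gt : (q - p) / (1 - p) < Phi v := by
      rw [div_lt_iff₀ (by linarith)]
      nlinarith
    have hKv : K < v := by
      apply Phi_strictMono.lt_iff_lt.mp
      rw [hK]; exact hv_gt
    -- tail integrals
    have hIv : 0 < ∫ w in Ioi v, gfun w := int_Ioi_pos v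
    have hIu_eq : (∫ w in Ioi u, gfun w) = (1 - p) * ∫ w in Ioi v, gfun w := by
      have e1 := one_sub_Phi u
      have e2 := one_sub_Phi v
      have hrat : 1 - Phi u = (1 - p) * (1 - Phi v) := by nlinarith
      rw [e1, e2] at hrat
      have hne : (Real.sqrt (2 * Real.pi))⁻¹ ≠ 0 := inv_ne_zero sqrt2pi_pos.ne'
      apply mul_left_cancel₀ hne
      rw [hrat]; ring
    have hshift : (∫ w in Ioi u, gfun w)
        ≤ Real.exp (-(v*s) - s^2/2) * ∫ w in Ioi v, gfun w := by
      rw [huv]; exact int_Ioi_shift v s hs0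
    have hE12 : Real.exp (-(v*s) - s^2/2) ≤ Real.exp (-(K*s) - s^2/2) := by
      apply Real.exp_le_exp.mpr
      have hks : K*s ≤ v*s := mul_le_mul_of_nonneg_right hKv.le hs0
      linarith
    have hE2 : Real.exp (-(K*s) - s^2/2) < 1 - p := hs₀ s hss
    have h5 : Real.exp (-(v*s) - s^2/2) * (∫ w in Ioi v, gfun w)
        ≤ Real.exp (-(K*s) - s^2/2) * ∫ w in Ioi v, gfun w :=
      mul_le_mul_of_nonneg_right hE12 hIv.le
    have h6 : Real.exp (-(K*s) - s^2/2) * (∫ w in Ioi v, gfun w)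
        < (1 - p) * ∫ w in Ioi v, gfun w :=
      mul_lt_mul_of_pos_right hE2 hIv
    linarith
  have : θ - (x - ip) = ip - u := by simp only [hu_def]; ring
  rw [this, abs_le]
  constructor <;> linarith
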